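/- Let A be an integral domain which is not a field, K its field of fractions, and R = A ⋉ K. Then the annihilator of the element (0,1) in R is the ideal 0 ⋉ K, and this ideal is not finitely generated; consequently R is not a coherent ring. -/
import Mathlib


/-- A ring is coherent if every finitely generated ideal is finitely presented. -/
def IsCoherentRing (R : Type*) [CommRing R] : Prop :=
  ∀ I : Ideal R, I.FG → Module.FinitePresentation R I

/-- For a domain `A` that is not a field with fraction field `K`, the annihilator of
`(0,1)` in `R = A ⋉ K` is `0 ⋉ K`, it is not finitely generated, and `R` is not coherent. -/
theorem trivSqZeroExt_not_coherent (A : Type*) [CommRing A] [IsDomain A] (hA : ¬IsField A)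
    (K : Type*) [Field K] [Algebra A K] [IsFractionRing A K]
    [Module Aᵐᵒᵖ K] [IsCentralScalar A K]
    (J : Ideal (TrivSqZeroExt A K))
    (hJ : ∀ x : TrivSqZeroExt A K, x ∈ J ↔ x * TrivSqZeroExt.inr (1 : K) = 0) :
    (∀ x : TrivSqZeroExt A K, x ∈ J ↔ x.fst = 0) ∧ ¬ J.FG ∧
      ¬ IsCoherentRing (TrivSqZeroExt A K) := by
  classical
  have hinj : Function.Injective (algebraMap A K) := IsFractionRing.injective A K
  -- compute x * inr 1
  have hmul : ∀ x : TrivSqZeroExt A K, x * TrivSqZeroExt.inr (1 : K) = TrivSqZeroExt.inr (x.fst • (1 : K)) := by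
    intro x
    ext
    · simp [TrivSqZeroExt.fst_mul, TrivSqZeroExt.fst_inr]
    · simp [TrivSqZeroExt.snd_mul, TrivSqZeroExt.fst_inr, TrivSqZeroExt.snd_inr]
  have h1 : ∀ x : TrivSqZeroExt A K, x ∈ J ↔ x.fst = 0 := by
    intro x
    rw [hJ, hmul]
    constructor
    · intro h
      have : x.fst • (1 : K) = 0 := by
        have := congrArg TrivSqZeroExt.snd h
        simpa using this
      rw [Algebra.smul_def, mul_one] at this
      exact hinj (by simpa using this)
    · intro h; simp [h]
  have hfg : ¬ J.FG := by
    rintro ⟨s, hs⟩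
    -- K is then a finite A-module
    have key : ∀ x ∈ Ideal.span (s : Set (TrivSqZeroExt A K)),
        x.snd ∈ Submodule.span A (TrivSqZeroExt.snd '' (s : Set (TrivSqZeroExt A K))) := by
      intro x hx
      induction hx using Submodule.span_induction with
      | mem x hx => exact Submodule.subset_span ⟨x, hx, rfl⟩
      | zero => simp
      | add x y _ _ ihx ihy =>
          have : (x + y).snd = x.snd + y.snd := rfl
          rw [this]; exact add_mem ihx ihy
      | smul r x hx ih =>
          have hx0 : x.fst = 0 := (h1 x).mp (hs ▸ hx)
          have : (r • x).snd = r.fst • x.snd := by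
            rw [smul_eq_mul, TrivSqZeroExt.snd_mul, hx0]
            simp
          rw [this]
          exact Submodule.smul_mem _ _ ih
    have hK : Submodule.span A (TrivSqZeroExt.snd '' (s : Set (TrivSqZeroExt A K))) = ⊤ := by
      rw [eq_top_iff]
      rintro e -
      have he : (TrivSqZeroExt.inr e : TrivSqZeroExt A K) ∈ Ideal.span (s : Set (TrivSqZeroExt A K)) := by
        rw [hs, h1]; simp
      simpa using key _ he
    haveI : Module.Finite A K :=
      ⟨⟨s.image TrivSqZeroExt.snd, by simpa [Finset.coe_image] using hK⟩⟩
    haveI : Algebra.IsIntegral A K := Algebra.IsIntegral.of_finite A K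
    exact hA (isField_of_isIntegral_of_isField hinj (Field.toIsField K))
  refine ⟨h1, hfg, ?_⟩
  intro hcoh
  -- the principal ideal generated by inr 1
  set I : Ideal (TrivSqZeroExt A K) := Ideal.span {TrivSqZeroExt.inr (1 : K)} with hI
  have hIfg : I.FG := ⟨{TrivSqZeroExt.inr (1 : K)}, by simp [hI]⟩
  have hfp := hcoh I hIfg
  set f : TrivSqZeroExt A K →ₗ[TrivSqZeroExt A K] I := LinearMap.toSpanSingleton (TrivSqZeroExt A K) I
    ⟨TrivSqZeroExt.inr (1 : K), Ideal.subset_span rfl⟩ with hf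
  have hsurj : Function.Surjective f := by
    rintro ⟨y, hy⟩
    obtain ⟨a, ha⟩ := Ideal.mem_span_singleton'.mp hy
    exact ⟨a, Subtype.ext (by simpa [f, LinearMap.toSpanSingleton_apply, smul_eq_mul] using ha)⟩
  have hker : LinearMap.ker f = J := by
    ext x
    simp only [LinearMap.mem_ker, hf, LinearMap.toSpanSingleton_apply]
    rw [hJ]
    constructor
    · intro h; exact congrArg Subtype.val h
    · intro h; exact Subtype.ext (by simpa [smul_eq_mul] using h)
  exact hfg (hker ▸ Module.FinitePresentation.fg_ker f hsurj)
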